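/- Let G = Γ𝒢 be the graph product of a family of nontrivial groups over a finite simple graph Γ with vertex set V, let A ⊆ V and let X ⊆ G_A be an arbitrary subset. Call a subgroup of G a Γ_A-parabolic subgroup if it has the form hG_Th⁻¹ with h ∈ G_A and T ⊆ A. Suppose P is a least element (with respect to inclusion) of the set of Γ_A-parabolic subgroups containing X, and Q is a least element of the set of parabolic subgroups of G containing X. Then P = Q. -/

import Mathlib

variable {V : Type*} [Fintype V] (Γ : SimpleGraph V) (Gv : V → Type*) [∀ v, Group (Gv v)]

open scoped commutatorElement in
/-- The commutation relators defining the graph product. -/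
def graphProdRels : Set (Monoid.CoprodI Gv) :=
  {x | ∃ (u v : V) (g : Gv u) (h : Gv v), Γ.Adj u v ∧
        x = ⁅Monoid.CoprodI.of g, Monoid.CoprodI.of h⁆}

/-- The graph product of the family `Gv` over the graph `Γ`: the quotient of the free
product by the normal closure of the commutation relators. -/
def GraphProduct : Type _ :=
  Monoid.CoprodI Gv ⧸ Subgroup.normalClosure (graphProdRels Γ Gv)

instance : Group (GraphProduct Γ Gv) :=
  inferInstanceAs (Group (Monoid.CoprodI Gv ⧸ Subgroup.normalClosure (graphProdRels Γ Gv)))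

/-- The canonical homomorphism from a vertex group to the graph product. -/
def GraphProduct.of (v : V) : Gv v →* GraphProduct Γ Gv :=
  (QuotientGroup.mk' (Subgroup.normalClosure (graphProdRels Γ Gv))).comp Monoid.CoprodI.of

/-- The full subgroup generated by the vertex groups with vertices in `A`. -/
def fullSubgroup (A : Set V) : Subgroup (GraphProduct Γ Gv) :=
  Subgroup.closure (⋃ v ∈ A, Set.range (GraphProduct.of Γ Gv v))

/-- The conjugate `g H g⁻¹` of a subgroup. -/
def conjSubgroup {G : Type*} [Group G] (g : G) (H : Subgroup G) : Subgroup G :=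
  Subgroup.map (MulAut.conj g).toMonoidHom H

/-- Parabolic subgroups of the graph product: conjugates of full subgroups. -/
def IsParabolic (P : Subgroup (GraphProduct Γ Gv)) : Prop :=
  ∃ (A : Set V) (g : GraphProduct Γ Gv), P = conjSubgroup g (fullSubgroup Γ Gv A)

/-- The link of a set of vertices: vertices adjacent to every vertex of `A`. -/
def linkSet (A : Set V) : Set V := {u : V | ∀ a ∈ A, Γ.Adj u a}


/-- A Γ_A-parabolic subgroup: a conjugate, by an element of the full subgroup on A,
of a full subgroup on a subset T of A. -/
def IsSubParabolic (A : Set V) (P : Subgroup (GraphProduct Γ Gv)) : Prop :=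
  ∃ (T : Set V) (h : GraphProduct Γ Gv), T ⊆ A ∧ h ∈ fullSubgroup Γ Gv A ∧
    P = conjSubgroup h (fullSubgroup Γ Gv T)

section Aux

variable {V : Type*} [Fintype V] (Γ : SimpleGraph V) (Gv : V → Type*) [∀ v, Group (Gv v)]

open scoped commutatorElement in
/-- images of adjacent vertex groups commute in the graph product -/
theorem GraphProduct.adj_comm {u v : V} (huv : Γ.Adj u v) (g : Gv u) (h : Gv v) :
    ⁅GraphProduct.of Γ Gv u g, GraphProduct.of Γ Gv v h⁆ = 1 := by
  have hmem : ⁅Monoid.CoprodI.of g, Monoid.CoprodI.of h⁆ ∈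
      Subgroup.normalClosure (graphProdRels Γ Gv) :=
    Subgroup.subset_normalClosure ⟨u, v, g, h, huv, rfl⟩
  have : (QuotientGroup.mk' (Subgroup.normalClosure (graphProdRels Γ Gv)))
      ⁅Monoid.CoprodI.of g, Monoid.CoprodI.of h⁆ = 1 := by
    rwa [QuotientGroup.mk'_apply, QuotientGroup.eq_one_iff]
  rw [map_commutatorElement] at this
  exact this

open Classical in
/-- core of the retraction onto the full subgroup on `A` -/
noncomputable def retrCore (A : Set V) : Monoid.CoprodI Gv →* GraphProduct Γ Gv :=
  Monoid.CoprodI.lift fun v => if v ∈ A then GraphProduct.of Γ Gv v else 1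

open scoped commutatorElement in
theorem retrCore_rels (A : Set V) :
    Subgroup.normalClosure (graphProdRels Γ Gv) ≤ (retrCore Γ Gv A).ker := by
  apply Subgroup.normalClosure_le_normal
  rintro x ⟨u, v, g, h, huv, rfl⟩
  have : (retrCore Γ Gv A) ⁅Monoid.CoprodI.of g, Monoid.CoprodI.of h⁆ = 1 := by
    rw [map_commutatorElement]
    simp only [retrCore, Monoid.CoprodI.lift_of]
    by_cases hu : u ∈ A <;> by_cases hv : v ∈ A <;>
      simp [hu, hv, commutatorElement_def, GraphProduct.adj_comm Γ Gv huv g h,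
        ← commutatorElement_def]
  exact this

/-- the retraction of the graph product onto the full subgroup on `A` -/
noncomputable def retr (A : Set V) : GraphProduct Γ Gv →* GraphProduct Γ Gv :=
  QuotientGroup.lift _ (retrCore Γ Gv A) (retrCore_rels Γ Gv A)

theorem retr_mk (A : Set V) (y : Monoid.CoprodI Gv) :
    retr Γ Gv A ((QuotientGroup.mk' (Subgroup.normalClosure (graphProdRels Γ Gv))) y) =
      retrCore Γ Gv A y := rfl

theorem retr_of_mem (A : Set V) {v : V} (hv : v ∈ A) (g : Gv v) :
    retr Γ Gv A (GraphProduct.of Γ Gv v g) = GraphProduct.of Γ Gv v g := by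
  have : retr Γ Gv A (GraphProduct.of Γ Gv v g) = retrCore Γ Gv A (Monoid.CoprodI.of g) := rfl
  rw [this, retrCore, Monoid.CoprodI.lift_of, if_pos hv]

theorem retr_of_not_mem (A : Set V) {v : V} (hv : v ∉ A) (g : Gv v) :
    retr Γ Gv A (GraphProduct.of Γ Gv v g) = 1 := by
  have : retr Γ Gv A (GraphProduct.of Γ Gv v g) = retrCore Γ Gv A (Monoid.CoprodI.of g) := rfl
  rw [this, retrCore, Monoid.CoprodI.lift_of, if_neg hv]
  rfl

theorem retr_fix (A : Set V) {x : GraphProduct Γ Gv} (hx : x ∈ fullSubgroup Γ Gv A) :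
    retr Γ Gv A x = x := by
  induction hx using Subgroup.closure_induction with
  | mem y hy =>
    obtain ⟨s, ⟨v, rfl⟩, hs⟩ := hy
    simp only [Set.mem_iUnion] at hs
    obtain ⟨hv, g, rfl⟩ := hs
    exact retr_of_mem Γ Gv A hv g
  | one => simp
  | mul x y _ _ hx hy => simp [map_mul, hx, hy]
  | inv x _ hx => simp [map_inv, hx]

theorem retr_mem (A : Set V) (x : GraphProduct Γ Gv) :
    retr Γ Gv A x ∈ fullSubgroup Γ Gv A := by
  obtain ⟨y, rfl⟩ := QuotientGroup.mk'_surjective (Subgroup.normalClosure (graphProdRels Γ Gv)) x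
  rw [retr_mk]
  induction y using Monoid.CoprodI.induction_on with
  | one => rw [map_one]; exact one_mem _
  | of i m =>
    by_cases hi : i ∈ A
    · rw [retrCore, Monoid.CoprodI.lift_of, if_pos hi]
      exact Subgroup.subset_closure (Set.mem_iUnion.2 ⟨i, Set.mem_iUnion.2 ⟨hi, m, rfl⟩⟩)
    · rw [retrCore, Monoid.CoprodI.lift_of, if_neg hi]
      exact one_mem _
  | mul x y hx hy => rw [map_mul]; exact mul_mem hx hy

theorem fullSubgroup_mono {A B : Set V} (h : A ⊆ B) :
    fullSubgroup Γ Gv A ≤ fullSubgroup Γ Gv B :=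
  Subgroup.closure_mono (Set.iUnion₂_mono' fun v hv => ⟨v, h hv, le_rfl⟩)

theorem retr_map_fullSubgroup (A S : Set V) :
    Subgroup.map (retr Γ Gv A) (fullSubgroup Γ Gv S) = fullSubgroup Γ Gv (S ∩ A) := by
  apply le_antisymm
  · rw [Subgroup.map_le_iff_le_comap]
    rw [fullSubgroup, Subgroup.closure_le]
    rintro x ⟨s, ⟨v, rfl⟩, hs⟩
    simp only [Set.mem_iUnion] at hs
    obtain ⟨hv, g, rfl⟩ := hs
    by_cases hvA : v ∈ A
    · simp only [Subgroup.coe_comap, Set.mem_preimage, SetLike.mem_coe,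
        retr_of_mem Γ Gv A hvA g]
      exact Subgroup.subset_closure (Set.mem_iUnion.2 ⟨v, Set.mem_iUnion.2 ⟨⟨hv, hvA⟩, g, rfl⟩⟩)
    · simp only [Subgroup.coe_comap, Set.mem_preimage, SetLike.mem_coe,
        retr_of_not_mem Γ Gv A hvA g]
      exact one_mem _
  · rw [fullSubgroup, Subgroup.closure_le]
    rintro x ⟨s, ⟨v, rfl⟩, hs⟩
    simp only [Set.mem_iUnion] at hs
    obtain ⟨⟨hvS, hvA⟩, g, rfl⟩ := hs
    exact ⟨GraphProduct.of Γ Gv v g,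
      Subgroup.subset_closure (Set.mem_iUnion.2 ⟨v, Set.mem_iUnion.2 ⟨hvS, g, rfl⟩⟩),
      retr_of_mem Γ Gv A hvA g⟩

theorem conjSubgroup_map {G H : Type*} [Group G] [Group H] (f : G →* H) (g : G)
    (K : Subgroup G) :
    Subgroup.map f (conjSubgroup g K) = conjSubgroup (f g) (Subgroup.map f K) := by
  ext x
  simp only [conjSubgroup, Subgroup.mem_map, MulEquiv.coe_toMonoidHom, MulAut.conj_apply]
  constructor
  · rintro ⟨y, ⟨k, hk, rfl⟩, rfl⟩
    exact ⟨f k, ⟨k, hk, rfl⟩, by simp [map_mul]⟩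
  · rintro ⟨y, ⟨k, hk, rfl⟩, rfl⟩
    exact ⟨g * k * g⁻¹, ⟨k, hk, rfl⟩, by simp [map_mul]⟩

theorem conjSubgroup_le {G : Type*} [Group G] {g : G} {K L : Subgroup G}
    (hg : g ∈ L) (hK : K ≤ L) : conjSubgroup g K ≤ L := by
  rintro x ⟨k, hk, rfl⟩
  exact mul_mem (mul_mem hg (hK hk)) (inv_mem hg)

end Aux

/-- for X contained in the full subgroup on A, the parabolic closure of X
inside it coincides with the parabolic closure of X in the whole graph product. -/
theorem stmt_14 [∀ v, Nontrivial (Gv v)]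
    (A : Set V) (X : Set (GraphProduct Γ Gv))
    (hXA : X ⊆ (fullSubgroup Γ Gv A : Set (GraphProduct Γ Gv)))
    (P Q : Subgroup (GraphProduct Γ Gv))
    (hPpar : IsSubParabolic Γ Gv A P) (hXP : X ⊆ (P : Set (GraphProduct Γ Gv)))
    (hPmin : ∀ P', IsSubParabolic Γ Gv A P' → X ⊆ (P' : Set (GraphProduct Γ Gv)) → P ≤ P')
    (hQpar : IsParabolic Γ Gv Q) (hXQ : X ⊆ (Q : Set (GraphProduct Γ Gv)))
    (hQmin : ∀ Q', IsParabolic Γ Gv Q' → X ⊆ (Q' : Set (GraphProduct Γ Gv)) → Q ≤ Q') :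
    P = Q := by
  -- Q ≤ P since P is parabolic containing X
  obtain ⟨T, h, hTA, hhA, hPeq⟩ := hPpar
  have hPparab : IsParabolic Γ Gv P := ⟨T, h, hPeq⟩
  have hQP : Q ≤ P := hQmin P hPparab hXP
  -- Q' := image of Q under the retraction onto A
  obtain ⟨S, g, hQeq⟩ := hQpar
  set Q' : Subgroup (GraphProduct Γ Gv) := Subgroup.map (retr Γ Gv A) Q with hQ'
  have hQ'eq : Q' = conjSubgroup (retr Γ Gv A g) (fullSubgroup Γ Gv (S ∩ A)) := by
    rw [hQ', hQeq, conjSubgroup_map, retr_map_fullSubgroup]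
  have hQ'sub : IsSubParabolic Γ Gv A Q' :=
    ⟨S ∩ A, retr Γ Gv A g, Set.inter_subset_right, retr_mem Γ Gv A g, hQ'eq⟩
  have hXQ' : X ⊆ (Q' : Set (GraphProduct Γ Gv)) := fun x hx =>
    ⟨x, hXQ hx, retr_fix Γ Gv A (hXA hx)⟩
  have hPQ' : P ≤ Q' := hPmin Q' hQ'sub hXQ'
  -- Q ≤ fullSubgroup A, so the retraction fixes Q pointwise and Q' = Q
  have hQA : Q ≤ fullSubgroup Γ Gv A := by
    refine le_trans hQP ?_
    rw [hPeq]
    exact conjSubgroup_le hhA (fullSubgroup_mono Γ Gv hTA)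
  have hQ'Q : Q' = Q := by
    apply le_antisymm
    · rintro x ⟨q, hq, rfl⟩
      rw [retr_fix Γ Gv A (hQA hq)]
      exact hq
    · intro q hq
      exact ⟨q, hq, retr_fix Γ Gv A (hQA hq)⟩
  exact le_antisymm (hQ'Q ▸ hPQ') hQP
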